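/- Let 1 ≤ p < ∞, w = (w_n) ∈ 𝒲, and let A ⊆ ℕ be a finite set. Then (i) ‖∑_{n∈A} g_n‖_{g(w,p)} = (∑_{n=1}^{|A|} w_n)^{1/p}, and (ii) the vector ∑_{n∈A} g_n is minimal in g(w,p) with respect to the canonical basis. -/

import Mathlib

open Filter Function Set
open scoped ENNReal NNReal Topology

noncomputable section

/-- The Garling norm of a real sequence, with values in `ℝ≥0∞`:
`‖f‖_{g(w,p)} = sup_φ (∑ n, |f (φ n)|^p · w n)^{1/p}`, the supremum being taken over all
strictly increasing maps `φ : ℕ → ℕ`. -/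
def garNorm (w : ℕ → ℝ) (p : ℝ) (f : ℕ → ℝ) : ℝ≥0∞ :=
  ⨆ φ : {φ : ℕ → ℕ // StrictMono φ},
    (∑' n, ENNReal.ofReal (|f (φ.1 n)| ^ p * w n)) ^ (1 / p)

/-- `w ∈ 𝒲`: a normalized, nonincreasing, positive weight tending to zero and non-summable.
(Sequences are indexed from `0`, so `w 0` is the paper's `w₁`.) -/
structure IsGarlingWeight (w : ℕ → ℝ) : Prop where
  pos : ∀ n, 0 < w n
  first : w 0 = 1
  antitone : ∀ n, w (n + 1) ≤ w n
  tendsto_zero : Tendsto w atTop (𝓝 0)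
  not_summable : ¬ Summable w

/-- `h` is minimal in `g(w,p)` with respect to the canonical basis: whenever `f ≺ h`
(i.e. `supp f ⊆ supp h`, the coordinates of `f` and `h` agree on `supp f`, and
`‖f‖_{g(w,p)} = ‖h‖_{g(w,p)}`), it follows that `f = h`. -/
def GarMinimal (w : ℕ → ℝ) (p : ℝ) (h : ℕ → ℝ) : Prop :=
  ∀ f : ℕ → ℝ, Function.support f ⊆ Function.support h →
    (∀ n ∈ Function.support f, f n = h n) →
    garNorm w p f = garNorm w p h → f = h

lemma gar_sum_le_range {w : ℕ → ℝ} (hmono : Antitone w) (S : Finset ℕ) :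
    ∑ n ∈ S, ENNReal.ofReal (w n) ≤ ∑ k ∈ Finset.range S.card, ENNReal.ofReal (w k) := by
  induction S using Finset.induction_on_max with
  | empty => simp
  | insert a S ha ih =>
    have hna : a ∉ S := fun h => lt_irrefl a (ha a h)
    rw [Finset.sum_insert hna, Finset.card_insert_of_notMem hna, Finset.sum_range_succ]
    have hScard : S.card ≤ a := by
      have : S ⊆ Finset.range a := fun b hb => Finset.mem_range.2 (ha b hb)
      simpa using Finset.card_le_card this
    have h1 : ENNReal.ofReal (w a) ≤ ENNReal.ofReal (w S.card) :=
      ENNReal.ofReal_le_ofReal (hmono hScard)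
    rw [add_comm]
    exact add_le_add ih h1

lemma gar_summand (p : ℝ) (hp : 1 ≤ p) (A : Finset ℕ) (w : ℕ → ℝ) (m n : ℕ) :
    ENNReal.ofReal (|(fun k => if k ∈ A then (1:ℝ) else 0) m| ^ p * w n)
      = if m ∈ A then ENNReal.ofReal (w n) else 0 := by
  by_cases hm : m ∈ A <;>
    simp [hm, Real.zero_rpow (by linarith : p ≠ 0)]

lemma garNorm_indicator (p : ℝ) (hp : 1 ≤ p) (w : ℕ → ℝ) (hw : IsGarlingWeight w)
    (A : Finset ℕ) :
    garNorm w p (fun k => if k ∈ A then 1 else 0)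
      = (∑ k ∈ Finset.range A.card, ENNReal.ofReal (w k)) ^ (1 / p) := by
  classical
  have hmono : Antitone w := antitone_nat_of_succ_le hw.antitone
  set N := A.sup id with hN
  have hleN : ∀ a ∈ A, a ≤ N := fun a ha => Finset.le_sup (f := id) ha
  -- tsum computation for any strict mono φ
  have key : ∀ φ : ℕ → ℕ, StrictMono φ →
      (∑' n, ENNReal.ofReal (|(fun k => if k ∈ A then (1:ℝ) else 0) (φ n)| ^ p * w n))
        = ∑ n ∈ (Finset.range (N+1)).filter (fun n => φ n ∈ A), ENNReal.ofReal (w n) := by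
    intro φ hφ
    have : ∀ n, ENNReal.ofReal (|(fun k => if k ∈ A then (1:ℝ) else 0) (φ n)| ^ p * w n)
        = if φ n ∈ A then ENNReal.ofReal (w n) else 0 := fun n => gar_summand p hp A w _ n
    rw [tsum_congr this, tsum_eq_sum (s := (Finset.range (N+1)).filter (fun n => φ n ∈ A))]
    · exact Finset.sum_congr rfl (fun n hn => by simp [(Finset.mem_filter.1 hn).2])
    · intro n hn
      by_cases hA : φ n ∈ A
      · have h1 : n ≤ φ n := hφ.le_apply
        have h2 : φ n ≤ N := hleN _ hA
        refine absurd ?_ hn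
        rw [Finset.mem_filter, Finset.mem_range]
        exact ⟨by omega, hA⟩
      · simp [hA]
  -- upper bound for any φ
  have upper : ∀ φ : ℕ → ℕ, StrictMono φ →
      (∑' n, ENNReal.ofReal (|(fun k => if k ∈ A then (1:ℝ) else 0) (φ n)| ^ p * w n))
        ≤ ∑ k ∈ Finset.range A.card, ENNReal.ofReal (w k) := by
    intro φ hφ
    rw [key φ hφ]
    set S := (Finset.range (N+1)).filter (fun n => φ n ∈ A) with hS
    have hcard : S.card ≤ A.card :=
      Finset.card_le_card_of_injOn φ (fun n hn => (Finset.mem_filter.1 hn).2)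
        (hφ.injective.injOn)
    calc ∑ n ∈ S, ENNReal.ofReal (w n)
        ≤ ∑ k ∈ Finset.range S.card, ENNReal.ofReal (w k) := gar_sum_le_range hmono S
      _ ≤ ∑ k ∈ Finset.range A.card, ENNReal.ofReal (w k) :=
          Finset.sum_le_sum_of_subset (Finset.range_subset_range.2 hcard)
  -- the optimal φ
  set ψ : ℕ → ℕ := fun k => if h : k < A.card then (A.orderEmbOfFin rfl ⟨k, h⟩ : ℕ) else N + 1 + k
    with hψ
  have hψmem : ∀ k (h : k < A.card), ψ k ∈ A := by
    intro k h
    simp only [hψ, dif_pos h]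
    exact Finset.orderEmbOfFin_mem A rfl _
  have hψmono : StrictMono ψ := by
    intro k l hkl
    simp only [hψ]
    by_cases hk : k < A.card <;> by_cases hl : l < A.card
    · rw [dif_pos hk, dif_pos hl]
      exact (A.orderEmbOfFin rfl).strictMono (show (⟨k,hk⟩ : Fin A.card) < ⟨l,hl⟩ from hkl)
    · rw [dif_pos hk, dif_neg hl]
      have : (A.orderEmbOfFin rfl ⟨k, hk⟩ : ℕ) ≤ N := hleN _ (Finset.orderEmbOfFin_mem A rfl _)
      omega
    · omega
    · rw [dif_neg hk, dif_neg hl]; omega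
  have lower : (∑ k ∈ Finset.range A.card, ENNReal.ofReal (w k))
      ≤ ∑' n, ENNReal.ofReal (|(fun k => if k ∈ A then (1:ℝ) else 0) (ψ n)| ^ p * w n) := by
    refine le_trans (le_of_eq ?_) (ENNReal.sum_le_tsum (Finset.range A.card))
    refine Finset.sum_congr rfl (fun n hn => ?_)
    rw [gar_summand p hp A w _ n, if_pos (hψmem n (Finset.mem_range.1 hn))]
  have hppos : (0:ℝ) ≤ 1 / p := by positivity
  refine le_antisymm ?_ ?_
  · exact iSup_le fun φ => ENNReal.rpow_le_rpow (upper φ.1 φ.2) hppos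
  · exact le_trans (ENNReal.rpow_le_rpow lower hppos)
      (le_iSup (fun φ : {φ : ℕ → ℕ // StrictMono φ} =>
        (∑' n, ENNReal.ofReal (|(fun k => if k ∈ A then (1:ℝ) else 0) (φ.1 n)| ^ p * w n)) ^ (1/p))
        ⟨ψ, hψmono⟩)


/-- For `1 ≤ p < ∞`, `w ∈ 𝒲` and a finite `A ⊆ ℕ`:
(i) `‖∑_{n ∈ A} g_n‖_{g(w,p)} = (∑_{n=1}^{|A|} w_n)^{1/p}`; and
(ii) the vector `∑_{n ∈ A} g_n` is minimal in `g(w,p)`. -/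
theorem garling_indicator_norm_and_minimal (p : ℝ) (hp : 1 ≤ p)
    (w : ℕ → ℝ) (hw : IsGarlingWeight w) (A : Finset ℕ) :
    garNorm w p (fun k => if k ∈ A then 1 else 0)
        = (∑ k ∈ Finset.range A.card, ENNReal.ofReal (w k)) ^ (1 / p) ∧
    GarMinimal w p (fun k => if k ∈ A then 1 else 0) := by
  classical
  refine ⟨garNorm_indicator p hp w hw A, ?_⟩
  intro f hsupp hagree hnorm
  set B : Finset ℕ := A.filter (fun n => f n ≠ 0) with hB
  have hfB : f = fun k => if k ∈ B then 1 else 0 := by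
    funext k
    by_cases hk : f k = 0
    · simp [hB, Finset.mem_filter, hk]
    · have hk' : k ∈ Function.support f := hk
      have hkA : k ∈ A := by
        have h2 := hsupp hk'
        simp only [Function.mem_support] at h2
        by_contra hA
        simp [hA] at h2
      have hk1 : f k = 1 := by
        have := hagree k hk'
        simpa [hkA] using this
      simp [hB, Finset.mem_filter, hkA, hk, hk1]
  have hBA : B ⊆ A := Finset.filter_subset _ _
  have hnorm' : (∑ k ∈ Finset.range B.card, ENNReal.ofReal (w k)) ^ (1/p)
      = (∑ k ∈ Finset.range A.card, ENNReal.ofReal (w k)) ^ (1/p) := by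
    rw [← garNorm_indicator p hp w hw B, ← garNorm_indicator p hp w hw A, ← hfB]
    exact hnorm
  have hsum : (∑ k ∈ Finset.range B.card, ENNReal.ofReal (w k))
      = ∑ k ∈ Finset.range A.card, ENNReal.ofReal (w k) :=
    ENNReal.rpow_left_injective (one_div_ne_zero (by linarith)) hnorm'
  have hcard : A.card ≤ B.card := by
    by_contra hlt
    push_neg at hlt
    have h1 : ∑ k ∈ Finset.range (B.card+1), ENNReal.ofReal (w k)
        ≤ ∑ k ∈ Finset.range A.card, ENNReal.ofReal (w k) :=
      Finset.sum_le_sum_of_subset (Finset.range_subset_range.2 hlt)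
    rw [Finset.sum_range_succ, ← hsum] at h1
    have hfin : (∑ k ∈ Finset.range B.card, ENNReal.ofReal (w k)) ≠ ⊤ := by
      refine ne_of_lt (ENNReal.sum_lt_top.2 fun k _ => ENNReal.ofReal_lt_top)
    have hpos : ENNReal.ofReal (w B.card) ≠ 0 := by
      simp only [ne_eq, ENNReal.ofReal_eq_zero, not_le]
      exact hw.pos B.card
    exact absurd h1 (not_le.2 (ENNReal.lt_add_right hfin hpos))
  have hBAeq : B = A := Finset.eq_of_subset_of_card_le hBA hcard
  rw [hfB, hBAeq]
end
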